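/- Markov Chain Tree Theorem: for an ergodic Markov chain with transition matrix T, the stationary probability of state j equals q_j / q, where q_j is the total weight of spanning trees converging to j in the weighted digraph corresponding to T, and q = Σ_k q_k. -/

import Mathlib

open Finset Relation Matrix
open scoped Classical

/-- `T` is a (row-)stochastic matrix. -/
def IsStochastic {n : ℕ} (T : Matrix (Fin n) (Fin n) ℝ) : Prop :=
  (∀ i j, 0 ≤ T i j) ∧ ∀ i, ∑ j, T i j = 1

/-- Irreducibility of a Markov chain: every state leads to every state. -/
def IsIrreducibleMC {n : ℕ} (T : Matrix (Fin n) (Fin n) ℝ) : Prop :=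
  ∀ i j, Relation.TransGen (fun a b => 0 < T a b) i j

/-- `pi` is the stationary distribution of `T`. -/
def IsStationaryDist {n : ℕ} (T : Matrix (Fin n) (Fin n) ℝ) (pi : Fin n → ℝ) : Prop :=
  (∀ i, 0 ≤ pi i) ∧ (∑ i, pi i) = 1 ∧ ∀ j, ∑ i, pi i * T i j = pi j

/-- The step relation of a set `A` of arcs. -/
def arcStep {n : ℕ} (A : Finset (Fin n × Fin n)) (x y : Fin n) : Prop := (x, y) ∈ A

/-- `A` is an in-forest: no loops, out-degree at most one, and no directed cycles;
equivalently, every weak component is a converging tree. -/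
def IsInForest {n : ℕ} (A : Finset (Fin n × Fin n)) : Prop :=
  (∀ a ∈ A, a.1 ≠ a.2) ∧
  (∀ v : Fin n, (A.filter fun a => a.1 = v).card ≤ 1) ∧
  ∀ v : Fin n, ¬ Relation.TransGen (arcStep A) v v

/-- `j` is a root (no outgoing arc) of the arc set `A`. -/
def IsRootOf {n : ℕ} (A : Finset (Fin n × Fin n)) (j : Fin n) : Prop := ∀ a ∈ A, a.1 ≠ j

/-- In the in-forest `A`, vertex `i` belongs to the tree converging to the root `j`. -/
def InTreeOf {n : ℕ} (A : Finset (Fin n × Fin n)) (i j : Fin n) : Prop :=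
  IsRootOf A j ∧ Relation.ReflTransGen (arcStep A) i j

/-- The weight of an arc set: the product of its arc weights. -/
noncomputable def digraphWeight {n : ℕ} (W : Matrix (Fin n) (Fin n) ℝ)
    (A : Finset (Fin n × Fin n)) : ℝ :=
  ∏ a ∈ A, W a.1 a.2

/-- Total weight of the in-forests satisfying the predicate `P`. -/
noncomputable def forestWeight {n : ℕ} (W : Matrix (Fin n) (Fin n) ℝ)
    (P : Finset (Fin n × Fin n) → Prop) : ℝ :=
  ∑ A : Finset (Fin n × Fin n), if IsInForest A ∧ P A then digraphWeight W A else 0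

/-- `σ_k`: total weight of in-forests with `k` arcs. -/
noncomputable def sigmaF {n : ℕ} (W : Matrix (Fin n) (Fin n) ℝ) (k : ℕ) : ℝ :=
  forestWeight W fun A => A.card = k

/-- `q^(k)_{ij}`: total weight of in-forests with `k` arcs in which vertex `i`
belongs to the tree converging to `j`. -/
noncomputable def qF {n : ℕ} (W : Matrix (Fin n) (Fin n) ℝ) (k : ℕ) (i j : Fin n) : ℝ :=
  forestWeight W fun A => A.card = k ∧ InTreeOf A i j

/-- `q_j`: total weight of spanning trees converging to `j`. -/
noncomputable def treeW {n : ℕ} (W : Matrix (Fin n) (Fin n) ℝ) (j : Fin n) : ℝ :=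
  qF W (n - 1) j j

/-- `f_{ij}`: total weight of 2-tree in-forests having one tree containing `i`
and the other tree converging to `j`. -/
noncomputable def fF {n : ℕ} (W : Matrix (Fin n) (Fin n) ℝ) (i j : Fin n) : ℝ :=
  forestWeight W fun A =>
    A.card = n - 2 ∧ IsRootOf A j ∧ ¬ Relation.ReflTransGen (arcStep A) i j

/-- `X` is the group inverse of `L`. -/
def IsGroupInverse {n : ℕ} (L X : Matrix (Fin n) (Fin n) ℝ) : Prop :=
  L * X * L = L ∧ X * L * X = X ∧ L * X = X * L

/-- `M` is the matrix of mean first passage times (with `M j j` the mean return time):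
the standard first-step equations. -/
def IsMFPTMatrix {n : ℕ} (T M : Matrix (Fin n) (Fin n) ℝ) : Prop :=
  ∀ i j, M i j = 1 + ∑ k ∈ Finset.univ.filter (fun k => k ≠ j), T i k * M k j

/-- `m` is the hitting-time function with `m i i = 0`. -/
def IsHittingTime {n : ℕ} (T : Matrix (Fin n) (Fin n) ℝ) (m : Fin n → Fin n → ℝ) : Prop :=
  (∀ i, m i i = 0) ∧ ∀ i j, i ≠ j → m i j = 1 + ∑ k, T i k * m k j

/-- The Laplacian matrix of the weight matrix `W`. -/
noncomputable def lap {n : ℕ} (W : Matrix (Fin n) (Fin n) ℝ) : Matrix (Fin n) (Fin n) ℝ :=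
  Matrix.diagonal (fun i => ∑ j, W i j) - W

section MCTTAux

variable {n : ℕ}

/-- A spanning in-tree rooted at `i`. -/
def TreePred (A : Finset (Fin n × Fin n)) (i : Fin n) : Prop :=
  IsInForest A ∧ A.card = n - 1 ∧ IsRootOf A i

/-- A loopless functional digraph all of whose vertices reach `j`. -/
def FuncPred (A : Finset (Fin n × Fin n)) (j : Fin n) : Prop :=
  (∀ a ∈ A, a.1 ≠ a.2) ∧ (∀ v : Fin n, (A.filter fun a => a.1 = v).card = 1) ∧
    ∀ v : Fin n, Relation.ReflTransGen (arcStep A) v j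

lemma arcStep_det {A : Finset (Fin n × Fin n)}
    (h : ∀ v : Fin n, (A.filter fun a => a.1 = v).card ≤ 1) {a b c : Fin n}
    (hab : arcStep A a b) (hac : arcStep A a c) : b = c := by
  by_contra hne
  have h2 : ({(a, b), (a, c)} : Finset (Fin n × Fin n)) ⊆ A.filter fun x => x.1 = a := by
    intro x hx
    simp only [Finset.mem_insert, Finset.mem_singleton] at hx
    rcases hx with rfl | rfl <;> exact Finset.mem_filter.mpr ⟨by assumption, rfl⟩
  have hcard := Finset.card_le_card h2
  rw [Finset.card_insert_of_notMem (by simp [hne]), Finset.card_singleton] at hcard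
  have := h a
  omega

lemma rtg_avoid_tail {α : Type*} {r : α → α → Prop} {i v : α}
    (h : Relation.ReflTransGen r v i) :
    Relation.ReflTransGen (fun x y => r x y ∧ x ≠ i) v i := by
  induction h using Relation.ReflTransGen.head_induction_on with
  | refl => exact .refl
  | head hr _ ih =>
      rename_i a c _
      rcases eq_or_ne a i with rfl | hne
      · exact .refl
      · exact .head ⟨hr, hne⟩ ih

lemma rtg_avoid_head {α : Type*} {r : α → α → Prop} {a b : α}
    (h : Relation.ReflTransGen r a b) :
    Relation.ReflTransGen (fun x y => r x y ∧ y ≠ a) a b := by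
  induction h with
  | refl => exact .refl
  | tail h1 h2 ih =>
      rename_i c d
      rcases eq_or_ne d a with rfl | hne
      · exact .refl
      · exact .tail ih ⟨h2, hne⟩

lemma orbit_back {α : Type*} {r : α → α → Prop}
    (hdet : ∀ {a b c : α}, r a b → r a c → b = c) {v : α}
    (hv : Relation.TransGen r v v) :
    ∀ {u : α}, Relation.ReflTransGen r v u → Relation.ReflTransGen r u v := by
  intro u h
  induction h with
  | refl => exact .refl
  | tail h1 h2 ih =>
      rename_i c d
      have hper : Relation.TransGen r c c :=
        Relation.TransGen.trans_left (Relation.TransGen.trans_right ih hv) h1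
      obtain ⟨w, hw, hwc⟩ := Relation.TransGen.head'_iff.mp hper
      have hwd : w = d := hdet hw h2
      subst hwd
      exact hwc.trans ih

lemma acyclic_of_root {A : Finset (Fin n × Fin n)} {i : Fin n}
    (hdeg : ∀ v : Fin n, (A.filter fun a => a.1 = v).card ≤ 1)
    (hroot : IsRootOf A i)
    (hreach : ∀ v, Relation.ReflTransGen (arcStep A) v i) :
    ∀ v, ¬ Relation.TransGen (arcStep A) v v := by
  intro v hv
  have hiv : Relation.ReflTransGen (arcStep A) i v :=
    orbit_back (r := arcStep A) (fun {_ _ _} hb hc => arcStep_det hdeg hb hc) hv (hreach v)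
  rcases hiv.cases_head with rfl | ⟨c, hc, -⟩
  · obtain ⟨w, hw, -⟩ := Relation.TransGen.head'_iff.mp hv
    exact hroot _ hw rfl
  · exact hroot _ hc rfl

lemma card_fiber_sum (A : Finset (Fin n × Fin n)) :
    A.card = ∑ v : Fin n, (A.filter fun a => a.1 = v).card :=
  Finset.card_eq_sum_card_fiberwise (fun x _ => Finset.mem_univ x.1)

lemma tree_outdeg {A : Finset (Fin n × Fin n)} {i : Fin n} (hA : TreePred A i) :
    ∀ v : Fin n, v ≠ i → (A.filter fun a => a.1 = v).card = 1 := by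
  obtain ⟨⟨hloop, hdeg, hacyc⟩, hcard, hroot⟩ := hA
  have hi0 : (A.filter fun a => a.1 = i).card = 0 := by
    rw [Finset.card_eq_zero, Finset.filter_eq_empty_iff]
    exact fun a ha => hroot a ha
  have hsum : ∑ v : Fin n, (A.filter fun a => a.1 = v).card = n - 1 := by
    rw [← card_fiber_sum, hcard]
  intro v hv
  by_contra hne
  have hv0 : (A.filter fun a => a.1 = v).card = 0 := by have := hdeg v; omega
  have hmem : v ∈ Finset.univ.erase i := Finset.mem_erase.mpr ⟨hv, Finset.mem_univ v⟩
  have h1 := Finset.add_sum_erase Finset.univ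
    (fun w => (A.filter fun a => a.1 = w).card) (Finset.mem_univ i)
  have h2 := Finset.add_sum_erase (Finset.univ.erase i)
    (fun w => (A.filter fun a => a.1 = w).card) hmem
  have h3 := Finset.sum_le_card_nsmul ((Finset.univ.erase i).erase v)
    (fun w => (A.filter fun a => a.1 = w).card) 1 (fun x _ => hdeg x)
  rw [smul_eq_mul, mul_one] at h3
  have hc1 : (Finset.univ.erase i).card = n - 1 := by
    rw [Finset.card_erase_of_mem (Finset.mem_univ i), Finset.card_univ, Fintype.card_fin]
  have hc2 : ((Finset.univ.erase i).erase v).card = n - 1 - 1 := by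
    rw [Finset.card_erase_of_mem hmem, hc1]
  have hpos : 0 < (Finset.univ.erase i).card := Finset.card_pos.mpr ⟨v, hmem⟩
  omega

lemma tree_reach {A : Finset (Fin n × Fin n)} {i : Fin n} (hA : TreePred A i) :
    ∀ v, Relation.ReflTransGen (arcStep A) v i := by
  have hacyc := hA.1.2.2
  have : IsIrrefl (Fin n) (fun a b => Relation.TransGen (arcStep A) b a) :=
    ⟨fun a h => hacyc a h⟩
  have : IsTrans (Fin n) (fun a b => Relation.TransGen (arcStep A) b a) :=
    ⟨fun _ _ _ hab hbc => hbc.trans hab⟩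
  have hwf : WellFounded (fun a b : Fin n => Relation.TransGen (arcStep A) b a) :=
    Finite.wellFounded_of_trans_of_irrefl _
  intro v
  induction v using hwf.induction with
  | _ v ih =>
    rcases eq_or_ne v i with rfl | hvi
    · exact .refl
    · obtain ⟨a, ha⟩ := Finset.card_eq_one.mp (tree_outdeg hA v hvi)
      have haf : a ∈ A.filter fun x => x.1 = v := ha ▸ Finset.mem_singleton_self a
      obtain ⟨haA, hav⟩ := Finset.mem_filter.mp haf
      have hstep : arcStep A v a.2 := by
        have : a = (v, a.2) := by rw [← hav]
        rwa [this] at haA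
      exact (ih a.2 (.single hstep)).head hstep

lemma func_card {A : Finset (Fin n × Fin n)} {j : Fin n} (hA : FuncPred A j) :
    A.card = n := by
  rw [card_fiber_sum A]
  simp [hA.2.1]

lemma func_insert {B : Finset (Fin n × Fin n)} {r w : Fin n} (hB : TreePred B r)
    (hrw : r ≠ w) (t : Fin n)
    (ht : Relation.ReflTransGen (arcStep (insert (r, w) B)) r t) :
    (r, w) ∉ B ∧ FuncPred (insert (r, w) B) t := by
  have hnot : (r, w) ∉ B := fun h => hB.2.2 _ h rfl
  refine ⟨hnot, ⟨?_, ?_, ?_⟩⟩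
  · intro a ha
    rcases Finset.mem_insert.mp ha with rfl | ha
    · exact hrw
    · exact hB.1.1 a ha
  · intro v
    rcases eq_or_ne v r with rfl | hv
    · have hfe : (insert (v, w) B).filter (fun a => a.1 = v) = {(v, w)} := by
        ext a
        simp only [Finset.mem_filter, Finset.mem_insert, Finset.mem_singleton]
        constructor
        · rintro ⟨rfl | haB, h2⟩
          · rfl
          · exact absurd h2 (hB.2.2 a haB)
        · rintro rfl; exact ⟨Or.inl rfl, rfl⟩
      rw [hfe, Finset.card_singleton]
    · have hfe : (insert (r, w) B).filter (fun a => a.1 = v)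
          = B.filter (fun a => a.1 = v) := by
        ext a
        simp only [Finset.mem_filter, Finset.mem_insert]
        constructor
        · rintro ⟨rfl | haB, h2⟩
          · exact absurd h2.symm hv
          · exact ⟨haB, h2⟩
        · rintro ⟨haB, h2⟩; exact ⟨Or.inr haB, h2⟩
      rw [hfe]
      exact tree_outdeg hB v hv
  · intro v
    have h1 : Relation.ReflTransGen (arcStep B) v r := tree_reach hB v
    exact (Relation.ReflTransGen.mono (fun x y h => Finset.mem_insert_of_mem h) _ _ h1).trans ht

lemma func_exists_cycarc {A : Finset (Fin n × Fin n)} {j : Fin n} (hA : FuncPred A j) :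
    ∃ i, (i, j) ∈ A ∧ Relation.ReflTransGen (arcStep A) j i := by
  obtain ⟨a, ha⟩ := Finset.card_eq_one.mp (hA.2.1 j)
  have haf : a ∈ A.filter fun x => x.1 = j := ha ▸ Finset.mem_singleton_self a
  obtain ⟨haA, haj⟩ := Finset.mem_filter.mp haf
  have hstep : arcStep A j a.2 := by
    have : a = (j, a.2) := by rw [← haj]
    rwa [this] at haA
  have hjj : Relation.TransGen (arcStep A) j j :=
    Relation.TransGen.head' hstep (hA.2.2 a.2)
  obtain ⟨i, hji, hij⟩ := Relation.TransGen.tail'_iff.mp hjj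
  exact ⟨i, hij, hji⟩

lemma root_erase {A : Finset (Fin n × Fin n)} {v : Fin n} {e : Fin n × Fin n}
    (hdeg1 : (A.filter fun a => a.1 = v).card = 1) (he : e ∈ A) (hev : e.1 = v) :
    IsRootOf (A.erase e) v := by
  intro a ha hav
  obtain ⟨b, hb⟩ := Finset.card_eq_one.mp hdeg1
  have h1 : e ∈ A.filter fun x => x.1 = v := Finset.mem_filter.mpr ⟨he, hev⟩
  have h2 : a ∈ A.filter fun x => x.1 = v :=
    Finset.mem_filter.mpr ⟨Finset.mem_of_mem_erase ha, hav⟩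
  rw [hb] at h1 h2
  simp only [Finset.mem_singleton] at h1 h2
  exact Finset.ne_of_mem_erase ha (h2.trans h1.symm)

lemma erase_deg_le {A : Finset (Fin n × Fin n)} {j : Fin n} (hA : FuncPred A j)
    (e : Fin n × Fin n) :
    ∀ v : Fin n, ((A.erase e).filter fun a => a.1 = v).card ≤ 1 := fun v =>
  le_trans (Finset.card_le_card
    (Finset.filter_subset_filter _ (Finset.erase_subset _ _))) (le_of_eq (hA.2.1 v))

lemma tree_of_func_erase_cyc {A : Finset (Fin n × Fin n)} {i j : Fin n}
    (hA : FuncPred A j) (hij : (i, j) ∈ A)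
    (hji : Relation.ReflTransGen (arcStep A) j i) :
    i ≠ j ∧ TreePred (A.erase (i, j)) i := by
  have hdeg := erase_deg_le hA (i, j)
  have hine : i ≠ j := hA.1 _ hij
  have hrooti : IsRootOf (A.erase (i, j)) i := root_erase (hA.2.1 i) hij rfl
  have hreach : ∀ v, Relation.ReflTransGen (arcStep (A.erase (i, j))) v i := by
    intro v
    have hv : Relation.ReflTransGen (arcStep A) v i := (hA.2.2 v).trans hji
    refine Relation.ReflTransGen.mono ?_ _ _ (rtg_avoid_tail hv)
    rintro x y ⟨hxy, hx⟩
    exact Finset.mem_erase.mpr ⟨fun h => hx (congrArg Prod.fst h), hxy⟩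
  refine ⟨hine, ⟨⟨fun a ha => hA.1 a (Finset.mem_of_mem_erase ha), hdeg,
    acyclic_of_root hdeg hrooti hreach⟩, ?_, hrooti⟩⟩
  rw [Finset.card_erase_of_mem hij, func_card hA]

lemma cycarc_unique {A : Finset (Fin n × Fin n)} {j : Fin n} (hA : FuncPred A j)
    {i i' : Fin n}
    (h1 : (i, j) ∈ A) (h2 : Relation.ReflTransGen (arcStep A) j i)
    (h1' : (i', j) ∈ A) (h2' : Relation.ReflTransGen (arcStep A) j i') : i = i' := by
  by_contra hne
  obtain ⟨hij, htree⟩ := tree_of_func_erase_cyc hA h1 h2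
  have hmem : (i', j) ∈ A.erase (i, j) :=
    Finset.mem_erase.mpr ⟨fun h => hne (congrArg Prod.fst h).symm, h1'⟩
  have hpath : Relation.ReflTransGen (arcStep (A.erase (i, j))) j i' := by
    refine Relation.ReflTransGen.mono ?_ _ _ (rtg_avoid_head h2')
    rintro x y ⟨hxy, hy⟩
    exact Finset.mem_erase.mpr ⟨fun h => hy (congrArg Prod.snd h), hxy⟩
  exact htree.1.2.2 i' (Relation.TransGen.head' hmem hpath)

lemma tree_of_func_erase_out {A : Finset (Fin n × Fin n)} {j k : Fin n}
    (hA : FuncPred A j) (hjk : (j, k) ∈ A) :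
    k ≠ j ∧ TreePred (A.erase (j, k)) j := by
  have hdeg := erase_deg_le hA (j, k)
  have hkj : k ≠ j := (hA.1 _ hjk).symm
  have hroot : IsRootOf (A.erase (j, k)) j := root_erase (hA.2.1 j) hjk rfl
  have hreach : ∀ v, Relation.ReflTransGen (arcStep (A.erase (j, k))) v j := by
    intro v
    refine Relation.ReflTransGen.mono ?_ _ _ (rtg_avoid_tail (hA.2.2 v))
    rintro x y ⟨hxy, hx⟩
    exact Finset.mem_erase.mpr ⟨fun h => hx (congrArg Prod.fst h), hxy⟩
  refine ⟨hkj, ⟨⟨fun a ha => hA.1 a (Finset.mem_of_mem_erase ha), hdeg,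
    acyclic_of_root hdeg hroot hreach⟩, ?_, hroot⟩⟩
  rw [Finset.card_erase_of_mem hjk, func_card hA]

/-- The tail of the unique cycle arc entering `j`. -/
noncomputable def cycTail (A : Finset (Fin n × Fin n)) (j : Fin n) : Fin n :=
  if h : ∃ i, (i, j) ∈ A ∧ Relation.ReflTransGen (arcStep A) j i then h.choose else j

lemma cycTail_spec {A : Finset (Fin n × Fin n)} {j : Fin n} (hA : FuncPred A j) :
    (cycTail A j, j) ∈ A ∧ Relation.ReflTransGen (arcStep A) j (cycTail A j) := by
  have h := func_exists_cycarc hA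
  rw [cycTail, dif_pos h]
  exact h.choose_spec

lemma cycTail_eq {A : Finset (Fin n × Fin n)} {j i : Fin n} (hA : FuncPred A j)
    (h1 : (i, j) ∈ A) (h2 : Relation.ReflTransGen (arcStep A) j i) :
    cycTail A j = i := by
  have hs := cycTail_spec hA
  exact cycarc_unique hA hs.1 hs.2 h1 h2

/-- The head of the unique arc leaving `j`. -/
noncomputable def outHead (A : Finset (Fin n × Fin n)) (j : Fin n) : Fin n :=
  if h : ∃ k, (j, k) ∈ A then h.choose else j

lemma outHead_spec {A : Finset (Fin n × Fin n)} {j : Fin n} (hA : FuncPred A j) :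
    (j, outHead A j) ∈ A := by
  obtain ⟨a, ha⟩ := Finset.card_eq_one.mp (hA.2.1 j)
  have haf : a ∈ A.filter fun x => x.1 = j := ha ▸ Finset.mem_singleton_self a
  obtain ⟨haA, haj⟩ := Finset.mem_filter.mp haf
  have h : ∃ k, (j, k) ∈ A := ⟨a.2, by
    have : a = (j, a.2) := by rw [← haj]
    rwa [this] at haA⟩
  rw [outHead, dif_pos h]
  exact h.choose_spec

lemma outHead_eq {A : Finset (Fin n × Fin n)} {j k : Fin n} (hA : FuncPred A j)
    (h1 : (j, k) ∈ A) : outHead A j = k :=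
  arcStep_det (fun v => le_of_eq (hA.2.1 v)) (outHead_spec hA) h1

end MCTTAux
section MCTTSums

variable {n : ℕ}

lemma digraphWeight_nonneg {T : Matrix (Fin n) (Fin n) ℝ} (hT : ∀ i j, 0 ≤ T i j)
    (A : Finset (Fin n × Fin n)) : 0 ≤ digraphWeight T A :=
  Finset.prod_nonneg fun a _ => hT a.1 a.2

lemma digraphWeight_insert (T : Matrix (Fin n) (Fin n) ℝ) {A : Finset (Fin n × Fin n)}
    {e : Fin n × Fin n} (he : e ∉ A) :
    digraphWeight T (insert e A) = T e.1 e.2 * digraphWeight T A :=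
  Finset.prod_insert he

lemma treeW_eq (T : Matrix (Fin n) (Fin n) ℝ) (j : Fin n) :
    treeW T j = ∑ A ∈ Finset.univ.filter (fun A => TreePred A j), digraphWeight T A := by
  rw [treeW, qF, forestWeight, Finset.sum_filter]
  refine Finset.sum_congr rfl fun A _ => ?_
  by_cases h : TreePred A j
  · rw [if_pos ⟨h.1, h.2.1, h.2.2, Relation.ReflTransGen.refl⟩, if_pos h]
  · rw [if_neg fun hc => h ⟨hc.1, hc.2.1, hc.2.2.1⟩, if_neg h]

lemma left_sum (T : Matrix (Fin n) (Fin n) ℝ) (j : Fin n) :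
    ∑ i ∈ Finset.univ.erase j, treeW T i * T i j
      = ∑ C ∈ Finset.univ.filter (fun C => FuncPred C j), digraphWeight T C := by
  have hrw : ∀ i ∈ Finset.univ.erase j, treeW T i * T i j
      = ∑ A ∈ Finset.univ.filter (fun A => TreePred A i), digraphWeight T A * T i j := by
    intro i _; rw [treeW_eq, Finset.sum_mul]
  rw [Finset.sum_congr rfl hrw, Finset.sum_sigma']
  refine Finset.sum_nbij' (fun p => insert (p.1, j) p.2)
    (fun C => ⟨cycTail C j, C.erase (cycTail C j, j)⟩) ?_ ?_ ?_ ?_ ?_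
  · rintro ⟨i, A⟩ hp
    rw [Finset.mem_sigma] at hp
    obtain ⟨hi, hAmem⟩ := hp
    have hij : i ≠ j := (Finset.mem_erase.mp hi).1
    have hA : TreePred A i := (Finset.mem_filter.mp hAmem).2
    have hfun := (func_insert hA hij j
      (Relation.ReflTransGen.single (Finset.mem_insert_self _ _))).2
    exact Finset.mem_filter.mpr ⟨Finset.mem_univ _, hfun⟩
  · intro C hC
    have hC : FuncPred C j := (Finset.mem_filter.mp hC).2
    have hs := cycTail_spec hC
    obtain ⟨hne, htree⟩ := tree_of_func_erase_cyc hC hs.1 hs.2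
    rw [Finset.mem_sigma]
    exact ⟨Finset.mem_erase.mpr ⟨hne, Finset.mem_univ _⟩,
      Finset.mem_filter.mpr ⟨Finset.mem_univ _, htree⟩⟩
  · rintro ⟨i, A⟩ hp
    rw [Finset.mem_sigma] at hp
    obtain ⟨hi, hAmem⟩ := hp
    have hij : i ≠ j := (Finset.mem_erase.mp hi).1
    have hA : TreePred A i := (Finset.mem_filter.mp hAmem).2
    obtain ⟨hnot, hfun⟩ := func_insert hA hij j
      (Relation.ReflTransGen.single (Finset.mem_insert_self _ _))
    have hct : cycTail (insert (i, j) A) j = i := by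
      refine cycTail_eq hfun (Finset.mem_insert_self _ _) ?_
      exact Relation.ReflTransGen.mono (fun x y h => Finset.mem_insert_of_mem h) _ _ (tree_reach hA j)
    simp only [hct, Finset.erase_insert hnot]
  · intro C hC
    have hC : FuncPred C j := (Finset.mem_filter.mp hC).2
    have hs := cycTail_spec hC
    exact Finset.insert_erase hs.1
  · rintro ⟨i, A⟩ hp
    rw [Finset.mem_sigma] at hp
    obtain ⟨hi, hAmem⟩ := hp
    have hij : i ≠ j := (Finset.mem_erase.mp hi).1
    have hA : TreePred A i := (Finset.mem_filter.mp hAmem).2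
    have hnot : (i, j) ∉ A := fun h => hA.2.2 _ h rfl
    rw [digraphWeight_insert T hnot]
    ring

lemma right_sum (T : Matrix (Fin n) (Fin n) ℝ) (j : Fin n) :
    ∑ k ∈ Finset.univ.erase j, treeW T j * T j k
      = ∑ C ∈ Finset.univ.filter (fun C => FuncPred C j), digraphWeight T C := by
  have hrw : ∀ k ∈ Finset.univ.erase j, treeW T j * T j k
      = ∑ A ∈ Finset.univ.filter (fun A => TreePred A j), digraphWeight T A * T j k := by
    intro k _; rw [treeW_eq, Finset.sum_mul]
  rw [Finset.sum_congr rfl hrw, Finset.sum_sigma']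
  refine Finset.sum_nbij' (fun p => insert (j, p.1) p.2)
    (fun C => ⟨outHead C j, C.erase (j, outHead C j)⟩) ?_ ?_ ?_ ?_ ?_
  · rintro ⟨k, A⟩ hp
    rw [Finset.mem_sigma] at hp
    obtain ⟨hk, hAmem⟩ := hp
    have hkj : k ≠ j := (Finset.mem_erase.mp hk).1
    have hA : TreePred A j := (Finset.mem_filter.mp hAmem).2
    have hfun := (func_insert hA hkj.symm j Relation.ReflTransGen.refl).2
    exact Finset.mem_filter.mpr ⟨Finset.mem_univ _, hfun⟩
  · intro C hC
    have hC : FuncPred C j := (Finset.mem_filter.mp hC).2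
    have hs := outHead_spec hC
    obtain ⟨hne, htree⟩ := tree_of_func_erase_out hC hs
    rw [Finset.mem_sigma]
    exact ⟨Finset.mem_erase.mpr ⟨hne, Finset.mem_univ _⟩,
      Finset.mem_filter.mpr ⟨Finset.mem_univ _, htree⟩⟩
  · rintro ⟨k, A⟩ hp
    rw [Finset.mem_sigma] at hp
    obtain ⟨hk, hAmem⟩ := hp
    have hkj : k ≠ j := (Finset.mem_erase.mp hk).1
    have hA : TreePred A j := (Finset.mem_filter.mp hAmem).2
    obtain ⟨hnot, hfun⟩ := func_insert hA hkj.symm j Relation.ReflTransGen.refl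
    have hct : outHead (insert (j, k) A) j = k :=
      outHead_eq hfun (Finset.mem_insert_self _ _)
    simp only [hct, Finset.erase_insert hnot]
  · intro C hC
    have hC : FuncPred C j := (Finset.mem_filter.mp hC).2
    exact Finset.insert_erase (outHead_spec hC)
  · rintro ⟨k, A⟩ hp
    rw [Finset.mem_sigma] at hp
    obtain ⟨hk, hAmem⟩ := hp
    have hkj : k ≠ j := (Finset.mem_erase.mp hk).1
    have hA : TreePred A j := (Finset.mem_filter.mp hAmem).2
    have hnot : (j, k) ∉ A := fun h => hA.2.2 _ h rfl
    rw [digraphWeight_insert T hnot]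
    ring

lemma q_stationary {T : Matrix (Fin n) (Fin n) ℝ} (hst : IsStochastic T) (j : Fin n) :
    ∑ i, treeW T i * T i j = treeW T j := by
  have hL : ∑ i, treeW T i * T i j
      = treeW T j * T j j + ∑ i ∈ Finset.univ.erase j, treeW T i * T i j :=
    (Finset.add_sum_erase _ _ (Finset.mem_univ j)).symm
  have hR : treeW T j = treeW T j * T j j + ∑ k ∈ Finset.univ.erase j, treeW T j * T j k := by
    conv_lhs => rw [← mul_one (treeW T j), ← hst.2 j]
    rw [Finset.mul_sum]
    exact (Finset.add_sum_erase _ _ (Finset.mem_univ j)).symm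
  calc ∑ i, treeW T i * T i j
      = treeW T j * T j j + ∑ i ∈ Finset.univ.erase j, treeW T i * T i j := hL
    _ = treeW T j * T j j + ∑ k ∈ Finset.univ.erase j, treeW T j * T j k := by
        rw [left_sum, right_sum]
    _ = treeW T j := hR.symm

end MCTTSums
section MCTTPos

variable {n : ℕ}

lemma no_into {B : Finset (Fin n × Fin n)} {u : Fin n} (hu : ∀ a ∈ B, a.2 ≠ u) :
    ∀ x, Relation.ReflTransGen (arcStep B) x u → x = u := by
  intro x h
  induction h with
  | refl => rfl
  | tail _ h2 _ => exact absurd rfl (hu _ h2)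

lemma transGen_drop {A : Finset (Fin n × Fin n)} {u v : Fin n}
    (hu : ∀ a ∈ insert (u, v) A, a.2 ≠ u) {x y : Fin n}
    (h : Relation.TransGen (arcStep (insert (u, v) A)) x y) (hx : x ≠ u) :
    Relation.TransGen (arcStep A) x y := by
  induction h using Relation.TransGen.head_induction_on with
  | single h' =>
      rename_i a
      refine Relation.TransGen.single ?_
      rcases Finset.mem_insert.mp h' with he | he
      · exact absurd (congrArg Prod.fst he) hx
      · exact he
  | head h' hrest ihp =>
      rename_i a c
      have hcu : c ≠ u := hu (a, c) h'
      have hac : arcStep A a c := by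
        rcases Finset.mem_insert.mp h' with he | he
        · exact absurd (congrArg Prod.fst he) hx
        · exact he
      exact (ihp hcu).head hac

/-- Growing a positive-weight in-tree: the induction step invariant. -/
lemma grow_tree {T : Matrix (Fin n) (Fin n) ℝ} (hirr : IsIrreducibleMC T) (j : Fin n) :
    ∀ m (S : Finset (Fin n)) (A : Finset (Fin n × Fin n)),
      j ∈ S → S.card + m = n →
      (∀ a ∈ A, a.1 ∈ S ∧ a.2 ∈ S ∧ a.1 ≠ j ∧ 0 < T a.1 a.2) →
      IsInForest A → A.card + 1 = S.card →
      (∀ v ∈ S, Relation.ReflTransGen (arcStep A) v j) →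
      ∃ A' : Finset (Fin n × Fin n), TreePred A' j ∧ ∀ a ∈ A', 0 < T a.1 a.2 := by
  intro m
  induction m with
  | zero =>
      intro S A hjS hcard harcs hforest hAcard hreach
      exact ⟨A, ⟨hforest, by omega, fun a ha => (harcs a ha).2.2.1⟩,
        fun a ha => (harcs a ha).2.2.2⟩
  | succ m ih =>
      intro S A hjS hcard harcs hforest hAcard hreach
      -- find a vertex outside S
      have hne : S ≠ Finset.univ := by
        intro h
        rw [h, Finset.card_univ, Fintype.card_fin] at hcard
        omega
      obtain ⟨w, hw⟩ : ∃ w, w ∉ S := by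
        by_contra hall
        push_neg at hall
        exact hne (Finset.eq_univ_iff_forall.mpr hall)
      -- boundary arc
      have hpath : Relation.ReflTransGen (fun a b => 0 < T a b) w j :=
        (hirr w j).to_reflTransGen
      obtain ⟨u, v, huS, hvS, huv⟩ :
          ∃ u v, u ∉ S ∧ v ∈ S ∧ 0 < T u v := by
        have key : ∀ x, Relation.ReflTransGen (fun a b => 0 < T a b) x j → x ∉ S →
            ∃ u v, u ∉ S ∧ v ∈ S ∧ 0 < T u v := by
          intro x hx
          induction hx using Relation.ReflTransGen.head_induction_on with
          | refl => exact fun h => absurd hjS h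
          | @head a c hr h ihh =>
              intro haS
              by_cases hcS : c ∈ S
              · exact ⟨a, c, haS, hcS, hr⟩
              · exact ihh hcS
        exact key w hpath hw
      have huj : u ≠ j := fun h => huS (by rw [h]; exact hjS)
      have hunv : u ≠ v := fun h => huS (h ▸ hvS)
      have hnotA : (u, v) ∉ A := fun h => huS (harcs _ h).1
      have hheads : ∀ a ∈ insert (u, v) A, a.2 ≠ u := by
        intro a ha
        rcases Finset.mem_insert.mp ha with rfl | ha
        · exact fun h => hunv h.symm
        · exact fun h => huS (h ▸ (harcs a ha).2.1)
      refine ih (insert u S) (insert (u, v) A) (Finset.mem_insert_of_mem hjS) ?_ ?_ ?_ ?_ ?_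
      · rw [Finset.card_insert_of_notMem huS]; omega
      · intro a ha
        rcases Finset.mem_insert.mp ha with rfl | ha
        · exact ⟨Finset.mem_insert_self _ _, Finset.mem_insert_of_mem hvS, huj, huv⟩
        · obtain ⟨h1, h2, h3, h4⟩ := harcs a ha
          exact ⟨Finset.mem_insert_of_mem h1, Finset.mem_insert_of_mem h2, h3, h4⟩
      · refine ⟨?_, ?_, ?_⟩
        · intro a ha
          rcases Finset.mem_insert.mp ha with rfl | ha
          · exact hunv
          · exact hforest.1 a ha
        · intro t
          by_cases htu : t = u
          · subst htu
            have : (insert (t, v) A).filter (fun a => a.1 = t) = {(t, v)} := by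
              ext a
              simp only [Finset.mem_filter, Finset.mem_insert, Finset.mem_singleton]
              constructor
              · rintro ⟨rfl | haA, h2⟩
                · rfl
                · exact absurd (h2 ▸ (harcs a haA).1) huS
              · rintro rfl; exact ⟨Or.inl rfl, rfl⟩
            rw [this, Finset.card_singleton]
          · have : (insert (u, v) A).filter (fun a => a.1 = t) =
                A.filter (fun a => a.1 = t) := by
              ext a
              simp only [Finset.mem_filter, Finset.mem_insert]
              constructor
              · rintro ⟨rfl | haA, h2⟩
                · exact absurd h2.symm htu
                · exact ⟨haA, h2⟩
              · rintro ⟨haA, h2⟩; exact ⟨Or.inr haA, h2⟩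
            rw [this]
            exact hforest.2.1 t
        · intro x hx
          by_cases hxu : x = u
          · subst hxu
            obtain ⟨c, hc, hcx⟩ := Relation.TransGen.head'_iff.mp hx
            have hcu : c ≠ x := hheads _ hc
            exact hcu (no_into hheads c hcx)
          · exact hforest.2.2 x (transGen_drop hheads hx hxu)
      · rw [Finset.card_insert_of_notMem hnotA, Finset.card_insert_of_notMem huS]
        omega
      · intro x hx
        rcases Finset.mem_insert.mp hx with rfl | hxS
        · refine Relation.ReflTransGen.head (Finset.mem_insert_self _ _) ?_
          exact Relation.ReflTransGen.mono (fun a b h => Finset.mem_insert_of_mem h) _ _ (hreach v hvS)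
        · exact Relation.ReflTransGen.mono (fun a b h => Finset.mem_insert_of_mem h) _ _ (hreach x hxS)

lemma exists_pos_tree {T : Matrix (Fin n) (Fin n) ℝ} (hn : 1 ≤ n)
    (hirr : IsIrreducibleMC T) (j : Fin n) :
    ∃ A, TreePred A j ∧ 0 < digraphWeight T A := by
  have hempty : ∀ v : Fin n, ¬ Relation.TransGen (arcStep (∅ : Finset (Fin n × Fin n))) v v := by
    intro v hv
    obtain ⟨c, hc, -⟩ := Relation.TransGen.head'_iff.mp hv
    exact absurd hc (Finset.notMem_empty _)
  obtain ⟨A, hA, hpos⟩ := grow_tree hirr j (n - 1) {j} ∅ (Finset.mem_singleton_self j)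
    (by rw [Finset.card_singleton]; omega)
    (fun a ha => absurd ha (Finset.notMem_empty _))
    ⟨fun a ha => absurd ha (Finset.notMem_empty _),
      fun v => by simp, hempty⟩
    (by simp)
    (fun v hv => by rw [Finset.mem_singleton.mp hv])
  exact ⟨A, hA, Finset.prod_pos fun a ha => hpos a ha⟩

lemma treeW_pos {T : Matrix (Fin n) (Fin n) ℝ} (hn : 1 ≤ n) (hst : IsStochastic T)
    (hirr : IsIrreducibleMC T) (j : Fin n) : 0 < treeW T j := by
  rw [treeW_eq]
  obtain ⟨A, hA, hpos⟩ := exists_pos_tree hn hirr j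
  refine Finset.sum_pos' (fun B _ => digraphWeight_nonneg hst.1 B) ?_
  exact ⟨A, Finset.mem_filter.mpr ⟨Finset.mem_univ _, hA⟩, hpos⟩

end MCTTPos
/-- Markov Chain Tree Theorem: the stationary probability of state `j`
equals `q_j / q`, where `q_j` is the total weight of spanning trees converging to `j`. -/
theorem stmt1 {n : ℕ} (hn : 1 ≤ n) (T : Matrix (Fin n) (Fin n) ℝ)
    (hst : IsStochastic T) (hirr : IsIrreducibleMC T)
    (pi : Fin n → ℝ) (hpi : IsStationaryDist T pi) :
    ∀ j, pi j = treeW T j / ∑ k, treeW T k := by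
  have hne : Nonempty (Fin n) := ⟨⟨0, hn⟩⟩
  have hqpos : ∀ k, 0 < treeW T k := treeW_pos hn hst hirr
  set s : ℝ := ∑ k, treeW T k with hs
  have hspos : 0 < s := Finset.sum_pos (fun k _ => hqpos k) Finset.univ_nonempty
  set ρ : Fin n → ℝ := fun k => treeW T k / s with hρ
  have hρpos : ∀ k, 0 < ρ k := fun k => div_pos (hqpos k) hspos
  have hρsum : ∑ k, ρ k = 1 := by
    rw [hρ, ← Finset.sum_div, ← hs, div_self (ne_of_gt hspos)]
  have hρstat : ∀ j, ∑ i, ρ i * T i j = ρ j := by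
    intro j
    have : ∀ i, ρ i * T i j = treeW T i * T i j / s := fun i => by
      rw [hρ]; ring
    rw [Finset.sum_congr rfl fun i _ => this i, ← Finset.sum_div, q_stationary hst j]
  -- uniqueness of the stationary distribution
  obtain ⟨i0, -, hi0⟩ := Finset.exists_min_image Finset.univ (fun k => pi k / ρ k)
    Finset.univ_nonempty
  set c : ℝ := pi i0 / ρ i0 with hc
  set x : Fin n → ℝ := fun k => pi k - c * ρ k with hx
  have hxnn : ∀ k, 0 ≤ x k := by
    intro k
    have h1 : c ≤ pi k / ρ k := hi0 k (Finset.mem_univ k)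
    have h2 : c * ρ k ≤ pi k := by
      rw [div_le_div_iff₀ (hρpos i0) (hρpos k)] at h1
      · calc c * ρ k = pi i0 / ρ i0 * ρ k := by rw [hc]
          _ ≤ pi k := by
            rw [div_mul_eq_mul_div, div_le_iff₀ (hρpos i0)]
            linarith [h1]
    simpa [hx] using h2
  have hxstat : ∀ j, ∑ i, x i * T i j = x j := by
    intro j
    have : ∀ i, x i * T i j = pi i * T i j - c * (ρ i * T i j) := fun i => by
      rw [hx]; ring
    rw [Finset.sum_congr rfl fun i _ => this i, Finset.sum_sub_distrib,
      ← Finset.mul_sum, hpi.2.2 j, hρstat j]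
  have hxi0 : x i0 = 0 := by
    have : c * ρ i0 = pi i0 := by
      rw [hc, div_mul_cancel₀ _ (ne_of_gt (hρpos i0))]
    simp [hx, this]
  have hzero : ∀ k, x k = 0 := by
    have step : ∀ a b, 0 < T a b → x b = 0 → x a = 0 := by
      intro a b hT hb
      have hsum : ∑ i, x i * T i b = 0 := by rw [hxstat b, hb]
      have hnn : ∀ i ∈ Finset.univ, 0 ≤ x i * T i b :=
        fun i _ => mul_nonneg (hxnn i) (hst.1 i b)
      have hz := (Finset.sum_eq_zero_iff_of_nonneg hnn).mp hsum a (Finset.mem_univ a)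
      exact (mul_eq_zero.mp hz).resolve_right (ne_of_gt hT)
    intro k
    have hk : Relation.TransGen (fun a b => 0 < T a b) k i0 := hirr k i0
    induction hk using Relation.TransGen.head_induction_on with
    | single h => exact step _ _ h hxi0
    | head h _ ihp => exact step _ _ h ihp
  have hpiρ : ∀ k, pi k = c * ρ k := by
    intro k
    have h := hzero k
    rw [hx] at h
    simp only at h
    linarith [h]
  have hc1 : c = 1 := by
    have h1 : (1 : ℝ) = ∑ k, pi k := hpi.2.1.symm
    rw [Finset.sum_congr rfl fun k _ => hpiρ k, ← Finset.mul_sum, hρsum, mul_one] at h1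
    exact h1.symm
  intro j
  rw [hpiρ j, hc1, one_mul]
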